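/- For Kingman's model with time-varying mutation probabilities, the size-biased fitness distribution admits a determinantal representation: with P_n^n = Q and P_j^n(dx) = (1−b_{j+1}) x P_{j+1}^n(dx)/∫ y P_{j+1}^n(dy) + b_{j+1} Q(dx) for 0 ≤ j ≤ n−1, one has x P_j^n(dx)/∫ y P_j^n(dy) = (|W_x^{j+1,n}|/|W^{j+1,n}|) Q(dx) for all 0 ≤ j ≤ n. -/

import Mathlib

open MeasureTheory

/-- The moment matrix `W^{j,n}` (here of size `s`, with subdiagonal entries
`-γ_start, -γ_{start+1}, …`), with first row `(m_{1+shift}, …, m_{s+shift})` and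
Toeplitz moment entries `m_{k-i+1}` above the subdiagonal. -/
noncomputable def Wgen (m γ : ℕ → ℝ) (shift start s : ℕ) : Matrix (Fin s) (Fin s) ℝ :=
  Matrix.of fun i k =>
    if (i : ℕ) = 0 then m ((k : ℕ) + 1 + shift)
    else if (k : ℕ) + 1 = (i : ℕ) then -γ (start + (i : ℕ) - 1)
    else if (i : ℕ) ≤ (k : ℕ) then m ((k : ℕ) - (i : ℕ) + 1)
    else 0

/-- The matrix `W_x^{j,n}`: as `Wgen` but with first row `(x, x², …, x^s)`. -/
noncomputable def WgenX (m γ : ℕ → ℝ) (x : ℝ) (start s : ℕ) : Matrix (Fin s) (Fin s) ℝ :=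
  Matrix.of fun i k =>
    if (i : ℕ) = 0 then x ^ ((k : ℕ) + 1)
    else if (k : ℕ) + 1 = (i : ℕ) then -γ (start + (i : ℕ) - 1)
    else if (i : ℕ) ≤ (k : ℕ) then m ((k : ℕ) - (i : ℕ) + 1)
    else 0

lemma minor00X (m γ : ℕ → ℝ) (x : ℝ) (t s : ℕ) :
    (WgenX m γ x t (s+2)).submatrix ((0 : Fin (s+2)).succAbove) Fin.succ
      = Wgen m γ 0 (t+1) (s+1) := by
  ext i k
  have hi := i.isLt
  have hk := k.isLt
  simp only [Matrix.submatrix_apply, Fin.succAbove_zero, WgenX, Wgen, Matrix.of_apply,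
    Fin.val_succ]
  split_ifs <;> first | rfl | contradiction | omega | (congr 1 <;> omega) | (rw [neg_inj]; congr 1 <;> omega)

lemma minor00W (m γ : ℕ → ℝ) (sh t s : ℕ) :
    (Wgen m γ sh t (s+2)).submatrix ((0 : Fin (s+2)).succAbove) Fin.succ
      = Wgen m γ 0 (t+1) (s+1) := by
  ext i k
  have hi := i.isLt
  have hk := k.isLt
  simp only [Matrix.submatrix_apply, Fin.succAbove_zero, Wgen, Matrix.of_apply, Fin.val_succ]
  split_ifs <;> first | rfl | contradiction | omega | (congr 1 <;> omega) | (rw [neg_inj]; congr 1 <;> omega)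

lemma minor10W (m γ : ℕ → ℝ) (sh t s : ℕ) :
    (Wgen m γ sh t (s+2)).submatrix ((1 : Fin (s+2)).succAbove) Fin.succ
      = Wgen m γ (sh+1) (t+1) (s+1) := by
  ext i k
  have hk := k.isLt
  rcases Fin.eq_zero_or_eq_succ i with h | ⟨i', h⟩
  · subst h
    have h0 : (1 : Fin (s+2)).succAbove 0 = 0 := rfl
    simp only [Matrix.submatrix_apply, h0, Wgen, Matrix.of_apply, Fin.val_succ, Fin.val_zero]
    split_ifs <;> first | rfl | contradiction | omega | (congr 1 <;> omega) | (rw [neg_inj]; congr 1 <;> omega)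
  · subst h
    have hi := i'.isLt
    have h1 : (1 : Fin (s+2)).succAbove i'.succ = i'.succ.succ := by
      apply Fin.succAbove_of_le_castSucc
      simp [Fin.le_def]
    simp only [Matrix.submatrix_apply, h1, Wgen, Matrix.of_apply, Fin.val_succ]
    split_ifs <;> first | rfl | contradiction | omega | (congr 1 <;> omega) | (rw [neg_inj]; congr 1 <;> omega)

lemma minor10X (m γ : ℕ → ℝ) (x : ℝ) (t s : ℕ) :
    (WgenX m γ x t (s+2)).submatrix ((1 : Fin (s+2)).succAbove) Fin.succ
      = (WgenX m γ x (t+1) (s+1)).updateRow 0 (x • (WgenX m γ x (t+1) (s+1)) 0) := by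
  ext i k
  have hk := k.isLt
  rcases Fin.eq_zero_or_eq_succ i with h | ⟨i', h⟩
  · subst h
    rw [Matrix.updateRow_self]
    have h0 : (1 : Fin (s+2)).succAbove 0 = 0 := rfl
    simp only [Matrix.submatrix_apply, h0, WgenX, Matrix.of_apply, Fin.val_succ, Fin.val_zero,
      Pi.smul_apply, smul_eq_mul]
    simp [pow_succ, mul_comm]
  · subst h
    rw [Matrix.updateRow_ne (Fin.succ_ne_zero i')]
    have hi := i'.isLt
    have h1 : (1 : Fin (s+2)).succAbove i'.succ = i'.succ.succ := by
      apply Fin.succAbove_of_le_castSucc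
      simp [Fin.le_def]
    simp only [Matrix.submatrix_apply, h1, WgenX, Matrix.of_apply, Fin.val_succ]
    split_ifs <;> first | rfl | contradiction | omega | (congr 1 <;> omega) | (rw [neg_inj]; congr 1 <;> omega)
lemma detX_rec (m γ : ℕ → ℝ) (x : ℝ) (t s : ℕ) :
    (WgenX m γ x t (s+2)).det =
      x * (Wgen m γ 0 (t+1) (s+1)).det + γ t * (x * (WgenX m γ x (t+1) (s+1)).det) := by
  rw [show s + 2 = (s+1) + 1 from rfl, Matrix.det_succ_column_zero]
  rw [Fin.sum_univ_succ, Fin.sum_univ_succ]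
  have hrest : ∀ i : Fin s, (WgenX m γ x t (s+2)) (Fin.succ (Fin.succ i)) 0 = 0 := by
    intro i
    simp only [WgenX, Matrix.of_apply, Fin.val_succ, Fin.val_zero]
    split_ifs <;> first | rfl | contradiction | omega
  have h00 : (WgenX m γ x t (s+2)) 0 0 = x := by
    simp [WgenX]
  have h10 : (WgenX m γ x t (s+2)) (Fin.succ 0) 0 = -γ t := by
    simp only [WgenX, Matrix.of_apply, Fin.val_succ, Fin.val_zero]
    norm_num
  rw [Finset.sum_eq_zero (fun i _ => by rw [hrest i]; ring)]
  rw [h00, h10, minor00X]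
  have : (Fin.succ (0 : Fin (s+1))) = (1 : Fin (s+2)) := rfl
  rw [this, minor10X, Matrix.det_updateRow_smul, Matrix.updateRow_eq_self]
  simp only [Fin.val_zero, pow_zero, Fin.val_one, pow_one, smul_eq_mul]
  ring

lemma detW_rec (m γ : ℕ → ℝ) (t s : ℕ) :
    (Wgen m γ 0 t (s+2)).det =
      m 1 * (Wgen m γ 0 (t+1) (s+1)).det + γ t * (Wgen m γ 1 (t+1) (s+1)).det := by
  rw [show s + 2 = (s+1) + 1 from rfl, Matrix.det_succ_column_zero]
  rw [Fin.sum_univ_succ, Fin.sum_univ_succ]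
  have hrest : ∀ i : Fin s, (Wgen m γ 0 t (s+2)) (Fin.succ (Fin.succ i)) 0 = 0 := by
    intro i
    simp only [Wgen, Matrix.of_apply, Fin.val_succ, Fin.val_zero]
    split_ifs <;> first | rfl | contradiction | omega
  have h00 : (Wgen m γ 0 t (s+2)) 0 0 = m 1 := by
    simp [Wgen]
  have h10 : (Wgen m γ 0 t (s+2)) (Fin.succ 0) 0 = -γ t := by
    simp only [Wgen, Matrix.of_apply, Fin.val_succ, Fin.val_zero]
    norm_num
  rw [Finset.sum_eq_zero (fun i _ => by rw [hrest i]; ring)]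
  rw [h00, h10, minor00W]
  have : (Fin.succ (0 : Fin (s+1))) = (1 : Fin (s+2)) := rfl
  rw [this, minor10W]
  simp only [Fin.val_zero, pow_zero, Fin.val_one, pow_one]
  ring

noncomputable def cof (m γ : ℕ → ℝ) (t s : ℕ) (k : Fin (s+1)) : ℝ :=
  ((Wgen m γ 0 t (s+1)).submatrix Fin.succ k.succAbove).det

lemma WgenX_submatrix_row0 (m γ : ℕ → ℝ) (x : ℝ) (t s : ℕ) (k : Fin (s+1)) :
    (WgenX m γ x t (s+1)).submatrix Fin.succ k.succAbove
      = (Wgen m γ 0 t (s+1)).submatrix Fin.succ k.succAbove := by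
  ext i j
  simp [WgenX, Wgen, Fin.val_succ]

lemma Wgen_submatrix_row0 (m γ : ℕ → ℝ) (sh t s : ℕ) (k : Fin (s+1)) :
    (Wgen m γ sh t (s+1)).submatrix Fin.succ k.succAbove
      = (Wgen m γ 0 t (s+1)).submatrix Fin.succ k.succAbove := by
  ext i j
  simp [Wgen, Fin.val_succ]

lemma detX_expand (m γ : ℕ → ℝ) (x : ℝ) (t s : ℕ) :
    (WgenX m γ x t (s+1)).det
      = ∑ k : Fin (s+1), (-1)^(k:ℕ) * x^((k:ℕ)+1) * cof m γ t s k := by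
  rw [Matrix.det_succ_row_zero]
  refine Finset.sum_congr rfl fun k _ => ?_
  rw [WgenX_submatrix_row0]
  simp [WgenX, cof]

lemma detW_expand (m γ : ℕ → ℝ) (sh t s : ℕ) :
    (Wgen m γ sh t (s+1)).det
      = ∑ k : Fin (s+1), (-1)^(k:ℕ) * m ((k:ℕ)+1+sh) * cof m γ t s k := by
  rw [Matrix.det_succ_row_zero]
  refine Finset.sum_congr rfl fun k _ => ?_
  rw [Wgen_submatrix_row0]
  simp [Wgen, cof]

lemma measurable_detX (m γ : ℕ → ℝ) (t s : ℕ) :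
    Measurable fun x : ℝ => (WgenX m γ x t s).det := by
  apply Continuous.measurable
  apply Continuous.matrix_det
  apply continuous_matrix
  intro i k
  simp only [WgenX, Matrix.of_apply]
  split_ifs <;> fun_prop

lemma detX_one (m γ : ℕ → ℝ) (x : ℝ) (t : ℕ) : (WgenX m γ x t 1).det = x := by
  rw [Matrix.det_fin_one]
  simp [WgenX]

lemma detW_one (m γ : ℕ → ℝ) (sh t : ℕ) : (Wgen m γ sh t 1).det = m (1 + sh) := by
  rw [Matrix.det_fin_one]
  simp [Wgen]
section
variable (Q : MeasureTheory.Measure ℝ) [IsProbabilityMeasure Q]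

lemma ae_Icc (hQc : Q (Set.Icc 0 1)ᶜ = 0) : ∀ᵐ x ∂Q, x ∈ Set.Icc (0:ℝ) 1 := by
  rw [MeasureTheory.ae_iff]
  exact hQc

lemma integrable_pow' (hQc : Q (Set.Icc 0 1)ᶜ = 0) (k : ℕ) :
    Integrable (fun x => x ^ k) Q := by
  refine ⟨(measurable_id.pow_const k).aestronglyMeasurable, ?_⟩
  apply HasFiniteIntegral.of_bounded (C := 1)
  filter_upwards [ae_Icc Q hQc] with x hx
  rw [Real.norm_eq_abs, abs_pow]
  exact pow_le_one₀ (abs_nonneg x) (abs_le.mpr ⟨by linarith [hx.1], hx.2⟩)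
end

lemma integral_mul_detX (Q : Measure ℝ) [IsProbabilityMeasure Q]
    (hQc : Q (Set.Icc 0 1)ᶜ = 0) (m γ : ℕ → ℝ) (hm : ∀ k, m k = ∫ x, x ^ k ∂Q) (t s : ℕ) :
    Integrable (fun x => x * (WgenX m γ x t (s+1)).det) Q ∧
      ∫ x, x * (WgenX m γ x t (s+1)).det ∂Q = (Wgen m γ 1 t (s+1)).det := by
  have hrep : (fun x : ℝ => x * (WgenX m γ x t (s+1)).det)
      = fun x => ∑ k : Fin (s+1), ((-1)^(k:ℕ) * cof m γ t s k) * x^((k:ℕ)+2) := by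
    funext x
    rw [detX_expand, Finset.mul_sum]
    exact Finset.sum_congr rfl fun k _ => by ring
  have hint : ∀ k : Fin (s+1),
      Integrable (fun x => ((-1)^(k:ℕ) * cof m γ t s k) * x^((k:ℕ)+2)) Q :=
    fun k => (integrable_pow' Q hQc ((k:ℕ)+2)).const_mul _
  constructor
  · rw [hrep]
    exact integrable_finset_sum _ fun k _ => hint k
  · rw [hrep, integral_finset_sum _ fun k _ => hint k]
    rw [detW_expand]
    refine Finset.sum_congr rfl fun k _ => ?_
    rw [MeasureTheory.integral_const_mul, ← hm ((k:ℕ)+2)]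
    have : (k:ℕ) + 1 + 1 = (k:ℕ) + 2 := by omega
    rw [this]
    ring

lemma lintegral_ofReal_id (Q : Measure ℝ) [IsProbabilityMeasure Q]
    (hQc : Q (Set.Icc 0 1)ᶜ = 0) (m : ℕ → ℝ) (hm : ∀ k, m k = ∫ x, x ^ k ∂Q) :
    ∫⁻ x, ENNReal.ofReal x ∂Q = ENNReal.ofReal (m 1) := by
  have hI : Integrable (fun x : ℝ => x) Q := by simpa using integrable_pow' Q hQc 1
  have hnn : 0 ≤ᵐ[Q] fun x : ℝ => x := by
    filter_upwards [ae_Icc Q hQc] with x hx using hx.1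
  have hm1 : m 1 = ∫ x, x ∂Q := by simpa using hm 1
  rw [hm1]
  exact (ofReal_integral_eq_lintegral_ofReal hI hnn).symm

lemma alg_id (x N1 D1 K M1 m1 b1 : ℝ) (hb0 : b1 ≠ 0) (hM1 : M1 ≠ 0) (hD1 : D1 ≠ 0)
    (hMval : (1-b1)*(K/D1)+b1*m1 ≠ 0) (hDj : m1*D1 + (1-b1)/b1*K ≠ 0) :
    (1-b1)/M1 * (M1 * ((N1/D1) * (x/((1-b1)*(K/D1)+b1*m1)))) + b1*(x/((1-b1)*(K/D1)+b1*m1))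
      = (x*D1 + (1-b1)/b1*(x*N1)) / (m1*D1 + (1-b1)/b1*K) := by
  have h1 : (1-b1)*(K/D1)+b1*m1 = (b1*D1*m1 - b1*K + K)/D1 := by field_simp; ring
  have h2 : m1*D1 + (1-b1)/b1*K = (b1*D1*m1 - b1*K + K)/b1 := by field_simp; ring
  have hE : (b1*D1*m1 - b1*K + K) ≠ 0 := by
    intro h
    exact hMval (by rw [h1, h, zero_div])
  rw [h1, h2]
  field_simp
  ring
lemma invariant (Q : Measure ℝ) [IsProbabilityMeasure Q] (hQc : Q (Set.Icc 0 1)ᶜ = 0)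
    (m : ℕ → ℝ) (hm : ∀ k, m k = ∫ x, x ^ k ∂Q)
    (b : ℕ → ℝ) (hb : ∀ j, b j ∈ Set.Ioo (0 : ℝ) 1)
    (γ : ℕ → ℝ) (hγ : ∀ j, γ j = (1 - b j) / b j)
    (n : ℕ) (P : ℕ → Measure ℝ) (hPn : P n = Q)
    (hrec : ∀ j < n, P j =
      (ENNReal.ofReal ((1 - b (j + 1)) / ∫ y, y ∂(P (j + 1)))) •
        ((P (j + 1)).withDensity (fun x => ENNReal.ofReal x))
      + (ENNReal.ofReal (b (j + 1))) • Q)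
    (hm1 : 0 < m 1) :
    ∀ d j, j + d = n →
      (P j) (Set.Icc (0:ℝ) 1)ᶜ = 0 ∧
      0 < ∫ y, y ∂(P j) ∧
      (∫⁻ x, ENNReal.ofReal x ∂(P j)) = ENNReal.ofReal (∫ y, y ∂(P j)) ∧
      0 < (Wgen m γ 0 (j+1) (n-j+1)).det ∧
      (∀ x ∈ Set.Icc (0:ℝ) 1, 0 ≤ (WgenX m γ x (j+1) (n-j+1)).det) ∧
      (P j).withDensity (fun x => ENNReal.ofReal (x / ∫ y, y ∂(P j))) =
        Q.withDensity (fun x => ENNReal.ofReal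
          ((WgenX m γ x (j+1) (n-j+1)).det / (Wgen m γ 0 (j+1) (n-j+1)).det)) := by
  have hMn : ∫ y, y ∂(P n) = m 1 := by
    rw [hPn]
    have h := hm 1
    simp only [pow_one] at h
    exact h.symm
  intro d
  induction d with
  | zero =>
    intro j hj
    have hj' : j = n := by omega
    subst hj'
    have hone : j - j + 1 = 1 := by omega
    refine ⟨by rw [hPn]; exact hQc, by rw [hMn]; exact hm1, ?_, ?_, ?_, ?_⟩
    · rw [hMn, hPn]
      exact lintegral_ofReal_id Q hQc m hm
    · rw [hone, detW_one]
      norm_num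
      exact hm1
    · intro x hx
      rw [hone, detX_one]
      exact hx.1
    · rw [hMn, hPn, hone]
      refine withDensity_congr_ae (Filter.Eventually.of_forall fun x => ?_)
      simp [detX_one, detW_one, WgenX, Wgen]
  | succ d ih =>
    intro j hj
    obtain ⟨h1, hMpos, hL, hD, hN, hmeq⟩ := ih (j+1) (by omega)
    have hjn : j < n := by omega
    set s := n - j - 1 with hsdef
    have hs1 : n - (j+1) + 1 = s + 1 := by omega
    have hs2 : n - j + 1 = s + 2 := by omega
    rw [hs1] at hD hN hmeq
    obtain ⟨hb0, hb1'⟩ := hb (j+1)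
    have hγpos : 0 < γ (j+1) := by rw [hγ]; exact div_pos (by linarith) hb0
    have Prec := hrec j hjn
    have haeP₁ : ∀ᵐ x ∂(P (j+1)), x ∈ Set.Icc (0:ℝ) 1 := by rw [ae_iff]; exact h1
    have hMne : (∫ y, y ∂(P (j+1))) ≠ 0 := ne_of_gt hMpos
    have hD1ne : (Wgen m γ 0 (j+2) (s+1)).det ≠ 0 := ne_of_gt hD
    -- measurability
    have hgmeas : Measurable fun x =>
        ENNReal.ofReal ((WgenX m γ x (j+2) (s+1)).det / (Wgen m γ 0 (j+2) (s+1)).det) :=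
      ((measurable_detX m γ (j+2) (s+1)).div_const _).ennreal_ofReal
    have hφmeas : ∀ c : ℝ, Measurable fun x : ℝ => ENNReal.ofReal (x / c) :=
      fun c => (measurable_id.div_const c).ennreal_ofReal
    -- Claim A
    have claimA : (P (j+1)).withDensity (fun x => ENNReal.ofReal x)
        = ENNReal.ofReal (∫ y, y ∂(P (j+1))) • Q.withDensity (fun x =>
            ENNReal.ofReal ((WgenX m γ x (j+2) (s+1)).det / (Wgen m γ 0 (j+2) (s+1)).det)) := by
      have hcongr : (fun x : ℝ => ENNReal.ofReal x) =ᵐ[P (j+1)]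
          fun x => ENNReal.ofReal (∫ y, y ∂(P (j+1))) *
            ENNReal.ofReal (x / ∫ y, y ∂(P (j+1))) := by
        filter_upwards [haeP₁] with x _
        rw [← ENNReal.ofReal_mul hMpos.le, mul_comm, div_mul_cancel₀ x hMne]
      rw [withDensity_congr_ae hcongr]
      rw [show (fun x => ENNReal.ofReal (∫ y, y ∂(P (j+1))) *
            ENNReal.ofReal (x / ∫ y, y ∂(P (j+1))))
          = (ENNReal.ofReal (∫ y, y ∂(P (j+1))) •
              fun x => ENNReal.ofReal (x / ∫ y, y ∂(P (j+1)))) from rfl]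
      rw [withDensity_smul _ (hφmeas _), hmeq]
    -- K facts
    obtain ⟨hKint, hKval⟩ := integral_mul_detX Q hQc m γ hm (j+2) s
    have hKnn : 0 ≤ ∫ x, x * (WgenX m γ x (j+2) (s+1)).det ∂Q :=
      integral_nonneg_of_ae (by
        filter_upwards [ae_Icc Q hQc] with x hx
        exact mul_nonneg hx.1 (hN x hx))
    -- Mval
    have hMvalpos : 0 < (1 - b (j+1)) *
        ((∫ x, x * (WgenX m γ x (j+2) (s+1)).det ∂Q) / (Wgen m γ 0 (j+2) (s+1)).det)
        + b (j+1) * m 1 :=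
      add_pos_of_nonneg_of_pos (mul_nonneg (by linarith) (div_nonneg hKnn hD.le))
        (mul_pos hb0 hm1)
    have hLQ : ∫⁻ x, ENNReal.ofReal x ∂Q = ENNReal.ofReal (m 1) :=
      lintegral_ofReal_id Q hQc m hm
    have hinner : ∫⁻ x, ENNReal.ofReal x ∂(Q.withDensity (fun x =>
        ENNReal.ofReal ((WgenX m γ x (j+2) (s+1)).det / (Wgen m γ 0 (j+2) (s+1)).det)))
        = ENNReal.ofReal ((∫ x, x * (WgenX m γ x (j+2) (s+1)).det ∂Q)
            / (Wgen m γ 0 (j+2) (s+1)).det) := by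
      rw [lintegral_withDensity_eq_lintegral_mul Q hgmeas ENNReal.measurable_ofReal]
      have hcg : (fun x => ((fun x => ENNReal.ofReal ((WgenX m γ x (j+2) (s+1)).det /
            (Wgen m γ 0 (j+2) (s+1)).det)) * fun x => ENNReal.ofReal x) x) =ᵐ[Q]
          fun x => ENNReal.ofReal (x * (WgenX m γ x (j+2) (s+1)).det /
            (Wgen m γ 0 (j+2) (s+1)).det) := by
        filter_upwards [ae_Icc Q hQc] with x hx
        simp only [Pi.mul_apply]
        rw [← ENNReal.ofReal_mul (div_nonneg (hN x hx) hD.le)]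
        congr 1
        ring
      rw [lintegral_congr_ae hcg,
        ← ofReal_integral_eq_lintegral_ofReal (hKint.div_const _) ?_, integral_div]
      filter_upwards [ae_Icc Q hQc] with x hx
      exact div_nonneg (mul_nonneg hx.1 (hN x hx)) hD.le
    have hLP1 : ∫⁻ x, ENNReal.ofReal x ∂((P (j+1)).withDensity (fun x => ENNReal.ofReal x))
        = ENNReal.ofReal ((∫ y, y ∂(P (j+1))) *
            ((∫ x, x * (WgenX m γ x (j+2) (s+1)).det ∂Q) / (Wgen m γ 0 (j+2) (s+1)).det)) := by
      rw [claimA, lintegral_smul_measure, hinner, smul_eq_mul, ← ENNReal.ofReal_mul hMpos.le]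
    have h1j : (P j) (Set.Icc (0:ℝ) 1)ᶜ = 0 := by
      rw [Prec, Measure.add_apply, Measure.smul_apply, Measure.smul_apply,
        withDensity_apply _ measurableSet_Icc.compl, Measure.restrict_eq_zero.mpr h1]
      simp [hQc]
    have hLPj : ∫⁻ x, ENNReal.ofReal x ∂(P j) = ENNReal.ofReal ((1 - b (j+1)) *
        ((∫ x, x * (WgenX m γ x (j+2) (s+1)).det ∂Q) / (Wgen m γ 0 (j+2) (s+1)).det)
        + b (j+1) * m 1) := by
      rw [Prec, lintegral_add_measure, lintegral_smul_measure, lintegral_smul_measure, hLP1, hLQ,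
        smul_eq_mul, smul_eq_mul]
      rw [← ENNReal.ofReal_mul (div_nonneg (by linarith) hMpos.le),
        ← ENNReal.ofReal_mul hb0.le,
        ← ENNReal.ofReal_add
          (mul_nonneg (div_nonneg (by linarith) hMpos.le)
            (mul_nonneg hMpos.le (div_nonneg hKnn hD.le)))
          (mul_nonneg hb0.le hm1.le)]
      congr 1
      field_simp
    have hMj : ∫ y, y ∂(P j) = (1 - b (j+1)) *
        ((∫ x, x * (WgenX m γ x (j+2) (s+1)).det ∂Q) / (Wgen m γ 0 (j+2) (s+1)).det)
        + b (j+1) * m 1 := by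
      have hae : 0 ≤ᵐ[P j] fun x : ℝ => x := by
        have h' : ∀ᵐ x ∂(P j), x ∈ Set.Icc (0:ℝ) 1 := by rw [ae_iff]; exact h1j
        filter_upwards [h'] with x hx using hx.1
      rw [MeasureTheory.integral_eq_lintegral_of_nonneg_ae hae aestronglyMeasurable_id,
        hLPj, ENNReal.toReal_ofReal hMvalpos.le]
    refine ⟨h1j, by rw [hMj]; exact hMvalpos, by rw [hMj]; exact hLPj, ?_, ?_, ?_⟩
    · rw [hs2, detW_rec, ← hKval, hγ]
      exact add_pos_of_pos_of_nonneg (mul_pos hm1 hD)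
        (mul_nonneg (div_nonneg (by linarith) hb0.le) hKnn)
    · intro x hx
      rw [hs2, detX_rec]
      exact add_nonneg (mul_nonneg hx.1 hD.le)
        (mul_nonneg hγpos.le (mul_nonneg hx.1 (hN x hx)))
    · have hFmeas : Measurable ((fun x =>
          ENNReal.ofReal ((WgenX m γ x (j+2) (s+1)).det / (Wgen m γ 0 (j+2) (s+1)).det)) *
          (fun x => ENNReal.ofReal (x / ((1 - b (j+1)) *
            ((∫ x, x * (WgenX m γ x (j+2) (s+1)).det ∂Q) / (Wgen m γ 0 (j+2) (s+1)).det)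
            + b (j+1) * m 1)))) := hgmeas.mul (hφmeas _)
      rw [hMj, hs2, Prec, withDensity_add_measure, withDensity_smul_measure,
        withDensity_smul_measure, claimA, withDensity_smul_measure,
        ← withDensity_mul Q hgmeas (hφmeas _), smul_smul,
        ← withDensity_smul _ hFmeas,
        ← withDensity_smul _ (hφmeas _),
        ← withDensity_add_left (hFmeas.const_smul _)]
      refine withDensity_congr_ae ?_
      filter_upwards [ae_Icc Q hQc] with x hx
      simp only [Pi.add_apply, Pi.smul_apply, Pi.mul_apply, smul_eq_mul]
      rw [detX_rec, detW_rec, ← hKval, hγ]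
      rw [← ENNReal.ofReal_mul (div_nonneg (hN x hx) hD.le), mul_assoc,
        ← ENNReal.ofReal_mul hMpos.le,
        ← ENNReal.ofReal_mul (div_nonneg (by linarith) hMpos.le),
        ← ENNReal.ofReal_mul hb0.le,
        ← ENNReal.ofReal_add
          (mul_nonneg (div_nonneg (by linarith) hMpos.le)
            (mul_nonneg hMpos.le (mul_nonneg (div_nonneg (hN x hx) hD.le)
              (div_nonneg hx.1 hMvalpos.le))))
          (mul_nonneg hb0.le (div_nonneg hx.1 hMvalpos.le))]
      congr 1
      exact alg_id x _ _ _ _ _ _ (ne_of_gt hb0) hMne hD1ne (ne_of_gt hMvalpos)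
        (ne_of_gt (add_pos_of_pos_of_nonneg (mul_pos hm1 hD)
          (mul_nonneg (div_nonneg (by linarith) hb0.le) hKnn)))

/-- Matrix representation of the backward sequence in Kingman's model with time-varying
mutation probabilities: with `P_n^n = Q` and the backward recursion, the size-biased
distribution of `P_j^n` has density `|W_x^{j+1,n}|/|W^{j+1,n}|` with respect to `Q`. -/
theorem stmt7 (Q : Measure ℝ) [IsProbabilityMeasure Q] (hQsupp : Q (Set.Icc 0 1) = 1)
    (m : ℕ → ℝ) (hm : ∀ k, m k = ∫ x, x ^ k ∂Q)
    (b : ℕ → ℝ) (hb : ∀ j, b j ∈ Set.Ioo (0 : ℝ) 1)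
    (γ : ℕ → ℝ) (hγ : ∀ j, γ j = (1 - b j) / b j)
    (n : ℕ) (P : ℕ → Measure ℝ)
    (hPn : P n = Q)
    (hrec : ∀ j < n, P j =
      (ENNReal.ofReal ((1 - b (j + 1)) / ∫ y, y ∂(P (j + 1)))) •
        ((P (j + 1)).withDensity (fun x => ENNReal.ofReal x))
      + (ENNReal.ofReal (b (j + 1))) • Q) :
    ∀ j ≤ n,
      (P j).withDensity (fun x => ENNReal.ofReal (x / ∫ y, y ∂(P j))) =
        Q.withDensity (fun x => ENNReal.ofReal
          ((WgenX m γ x (j + 1) (n - j + 1)).det / (Wgen m γ 0 (j + 1) (n - j + 1)).det)) := by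
  have hQc : Q (Set.Icc (0:ℝ) 1)ᶜ = 0 := by
    have h := measure_compl (measurableSet_Icc : MeasurableSet (Set.Icc (0:ℝ) 1))
      (measure_ne_top Q _)
    rw [hQsupp, measure_univ] at h
    simpa using h
  have hm1nn : 0 ≤ m 1 := by
    rw [hm 1]
    refine integral_nonneg_of_ae ?_
    filter_upwards [ae_Icc Q hQc] with x hx
    simpa using hx.1
  intro j hj
  rcases eq_or_lt_of_le hm1nn with hm1 | hm1
  · -- degenerate case: m 1 = 0
    have hQm1 : ∫ x, x ∂Q = 0 := by
      have h := hm 1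
      simp only [pow_one] at h
      rw [← h, ← hm1]
    have hae0 : ∀ᵐ x ∂Q, x = 0 := by
      have hnn : 0 ≤ᵐ[Q] fun x : ℝ => x := by
        filter_upwards [ae_Icc Q hQc] with x hx using hx.1
      have hI1 : Integrable (fun x : ℝ => x) Q := by simpa using integrable_pow' Q hQc 1
      have h0 := (integral_eq_zero_iff_of_nonneg_ae hnn hI1).mp hQm1
      filter_upwards [h0] with x hx using hx
    have hmk : ∀ k : ℕ, m (k+1) = 0 := by
      intro k
      rw [hm (k+1)]
      have hcong : (fun x : ℝ => x ^ (k+1)) =ᵐ[Q] fun _ => (0:ℝ) := by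
        filter_upwards [hae0] with x hx
        simp [hx]
      rw [integral_congr_ae hcong, integral_zero]
    have hMdeg : ∀ d j', j' + d = n → ∫ y, y ∂(P j') = 0 := by
      intro d
      induction d with
      | zero =>
        intro j' hj'
        have h' : j' = n := by omega
        subst h'
        rw [hPn, hQm1]
      | succ d ih =>
        intro j' hj'
        have hM1 := ih (j'+1) (by omega)
        have Prec := hrec j' (by omega)
        rw [hM1, div_zero, ENNReal.ofReal_zero, zero_smul, zero_add] at Prec
        rw [Prec, integral_smul_measure, hQm1, smul_zero]
    have hMj : ∫ y, y ∂(P j) = 0 := hMdeg (n - j) j (by omega)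
    have hDj : (Wgen m γ 0 (j+1) (n-j+1)).det = 0 := by
      apply Matrix.det_eq_zero_of_row_eq_zero (i := (⟨0, by omega⟩ : Fin (n-j+1)))
      intro k
      simpa [Wgen] using hmk (k : ℕ)
    rw [hMj, hDj]
    simp [div_zero]
  · obtain ⟨-, -, -, -, -, h6⟩ :=
      invariant Q hQc m hm b hb γ hγ n P hPn hrec hm1 (n - j) j (by omega)
    exact h6
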